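/- For every i ∈ {κ+1, …, n−2}: bar-α_{i+1}/ρ_{i+1} > 1 if and only if i ∈ H. -/

import Mathlib

open Finset

/-- `rhoProd ρ k j = ∏_{i=k+1}^{j} ρ i`. -/
noncomputable def rhoProd (ρ : ℕ → ℝ) (k j : ℕ) : ℝ := ∏ i ∈ Finset.Icc (k + 1) j, ρ i

/-- `k` is a binding index: `k ∈ {κ+1, …, n-1}` and `ρ_{k,j} < 1` for all `j ∈ {k+1, …, n-1}`. -/
def Binding (ρ : ℕ → ℝ) (n κ k : ℕ) : Prop :=
  κ + 1 ≤ k ∧ k ≤ n - 1 ∧ ∀ j, k + 1 ≤ j → j ≤ n - 1 → rhoProd ρ k j < 1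

/-- `kmin ρ n κ i = min {k ∈ H : k ≥ i}`, the smallest binding index `≥ i`. -/
noncomputable def kmin (ρ : ℕ → ℝ) (n κ i : ℕ) : ℕ :=
  sInf {k | Binding ρ n κ k ∧ i ≤ k}

/-- `bar-α_i`: equals `α i` for `i ≤ κ` and `(ρ_{i, k(i)})⁻¹` for `i > κ`. -/
noncomputable def barAlpha (ρ α : ℕ → ℝ) (n κ i : ℕ) : ℝ :=
  if i ≤ κ then α i else (rhoProd ρ i (kmin ρ n κ i))⁻¹

lemma rhoProd_pos (ρ : ℕ → ℝ) (n : ℕ) (hρ : ∀ i, 1 ≤ i → i ≤ n → 0 < ρ i)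
    (k j : ℕ) (hj : j ≤ n) : 0 < rhoProd ρ k j := by
  apply Finset.prod_pos
  intro i hi
  simp only [Finset.mem_Icc] at hi
  exact hρ i (by omega) (by omega)

lemma rhoProd_mul (ρ : ℕ → ℝ) {k m j : ℕ} (h1 : k ≤ m) (h2 : m ≤ j) :
    rhoProd ρ k m * rhoProd ρ m j = rhoProd ρ k j := by
  unfold rhoProd
  rw [Finset.Icc_add_one_left_eq_Ioc, Finset.Icc_add_one_left_eq_Ioc, Finset.Icc_add_one_left_eq_Ioc]
  exact Finset.prod_Ioc_consecutive _ h1 h2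

theorem stmt3 (n : ℕ) (hn : 2 ≤ n) (ρ α : ℕ → ℝ)
    (hρ : ∀ i, 1 ≤ i → i ≤ n → 0 < ρ i)
    (hα0pos : 0 < α 0) (hα0le : α 0 ≤ 1)
    (hrec : ∀ k, 1 ≤ k → k ≤ n → α k = min (α (k - 1) * ρ k) 1)
    (κ : ℕ) (hκle : κ ≤ n - 1) (hκ1 : α κ = 1)
    (hκmax : ∀ k, k ≤ n - 1 → α k = 1 → k ≤ κ) :
    ∀ i, κ + 1 ≤ i → i ≤ n - 2 →
      (1 < barAlpha ρ α n κ (i + 1) / ρ (i + 1) ↔ Binding ρ n κ i) := by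
  intro i hi hi2
  have hκi : ¬ (i + 1 ≤ κ) := by omega
  -- the set of binding indices ≥ i+1 is nonempty (contains n-1)
  have hmem : (n - 1) ∈ {k | Binding ρ n κ k ∧ i + 1 ≤ k} := by
    refine ⟨⟨by omega, le_refl _, fun j hj1 hj2 => absurd hj1 (by omega)⟩, by omega⟩
  have hkmem : kmin ρ n κ (i + 1) ∈ {k | Binding ρ n κ k ∧ i + 1 ≤ k} := by
    rw [kmin]
    exact Nat.sInf_mem ⟨n - 1, hmem⟩
  set kstar := kmin ρ n κ (i + 1) with hkdef
  have hik : i + 1 ≤ kstar := hkmem.2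
  have hkle : kstar ≤ n - 1 := hkmem.1.2.1
  have hkbind : Binding ρ n κ kstar := hkmem.1
  -- positivity
  have hp1 : 0 < ρ (i + 1) := hρ (i + 1) (by omega) (by omega)
  have hp2 : 0 < rhoProd ρ (i + 1) kstar := rhoProd_pos ρ n hρ _ _ (by omega)
  have hp3 : 0 < rhoProd ρ i kstar := rhoProd_pos ρ n hρ _ _ (by omega)
  have hsingle : rhoProd ρ i (i + 1) = ρ (i + 1) := by
    unfold rhoProd; simp
  have hprod : rhoProd ρ i kstar = ρ (i + 1) * rhoProd ρ (i + 1) kstar := by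
    rw [← rhoProd_mul ρ (Nat.le_succ i) hik, hsingle]
  have hba : barAlpha ρ α n κ (i + 1) / ρ (i + 1) = (rhoProd ρ i kstar)⁻¹ := by
    rw [barAlpha, if_neg hκi, ← hkdef, hprod, mul_inv]
    ring
  rw [hba]
  have hiff : 1 < (rhoProd ρ i kstar)⁻¹ ↔ rhoProd ρ i kstar < 1 := by
    rw [one_lt_inv_iff₀]
    exact ⟨fun h => h.2, fun h => ⟨hp3, h⟩⟩
  rw [hiff]
  constructor
  · intro hlt
    -- first: for j ≥ kstar
    have upper : ∀ j, kstar ≤ j → j ≤ n - 1 → rhoProd ρ i j < 1 := by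
      intro j h1 h2
      rcases eq_or_lt_of_le h1 with rfl | h
      · exact hlt
      · have hb := hkbind.2.2 j (by omega) h2
        have hpa : 0 < rhoProd ρ kstar j := rhoProd_pos ρ n hρ _ _ (by omega)
        have hm := rhoProd_mul ρ (show i ≤ kstar by omega) (le_of_lt h)
        nlinarith
    have key : ∀ m j, n - 1 - j ≤ m → i + 1 ≤ j → j ≤ n - 1 → rhoProd ρ i j < 1 := by
      intro m
      induction m with
      | zero => intro j hm hj1 hj2; exact upper j (by omega) hj2
      | succ m ih =>
        intro j hm hj1 hj2
        by_cases hk : kstar ≤ j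
        · exact upper j hk hj2
        · push_neg at hk
          have hnb : ¬ Binding ρ n κ j := by
            intro hb
            have : kstar ≤ j := by
              rw [hkdef, kmin]
              exact Nat.sInf_le ⟨hb, hj1⟩
            omega
          rw [Binding] at hnb
          push_neg at hnb
          obtain ⟨j', hj'1, hj'2, hj'3⟩ := hnb (by omega) hj2
          have hlt' := ih j' (by omega) (by omega) hj'2
          have hm2 := rhoProd_mul ρ (show i ≤ j by omega) (show j ≤ j' by omega)
          have hposij : 0 < rhoProd ρ i j := rhoProd_pos ρ n hρ _ _ (by omega)
          nlinarith
    exact ⟨by omega, by omega, fun j hj1 hj2 => key (n - 1 - j) j le_rfl (by omega) hj2⟩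
  · intro hb
    exact hb.2.2 kstar (by omega) hkle
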